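/- Let V be a real vector space with a symmetric bilinear form g, and T : V → V a g-self-adjoint operator. Suppose N is a T-invariant subspace of V on which g is positive semidefinite and degenerate, spanned by a null vector n and spacelike vectors x₁,…,x_{r−1} all g-orthogonal to n and to each other (so N is a null r-subspace, r ≥ 2). Then n is an eigenvector of T. -/
import Mathlib


theorem stmt_9 {V : Type*} [AddCommGroup V] [Module ℝ V]
    (g : LinearMap.BilinForm ℝ V)
    (hsymm : ∀ u v : V, g u v = g v u)
    (T : V →ₗ[ℝ] V)
    (hsa : ∀ u v : V, g (T u) v = g u (T v))
    (r : ℕ) (hr : 2 ≤ r)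
    (n : V) (hn0 : n ≠ 0) (hnnull : g n n = 0)
    (x : Fin (r - 1) → V)
    (hortho : ∀ i j, g (x i) (x j) = if i = j then 1 else 0)
    (hnx : ∀ i, g n (x i) = 0)
    (N : Submodule ℝ V) (hN : N = Submodule.span ℝ ({n} ∪ Set.range x))
    (hinv : ∀ v ∈ N, T v ∈ N) :
    ∃ α : ℝ, T n = α • n := by
  -- g n vanishes on N
  have hgn : ∀ w ∈ N, g n w = 0 := by
    intro w hw
    rw [hN] at hw
    induction hw using Submodule.span_induction with
    | mem y hy =>
      rcases hy with hy | ⟨i, rfl⟩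
      · simp only [Set.mem_singleton_iff] at hy; subst hy; exact hnnull
      · exact hnx i
    | zero => simp
    | add a b _ _ ha hb => simp [ha, hb]
    | smul c a _ ha => simp [ha]
  have hnN : n ∈ N := by
    rw [hN]; exact Submodule.subset_span (Or.inl rfl)
  have hxN : ∀ i, x i ∈ N := by
    intro i; rw [hN]; exact Submodule.subset_span (Or.inr ⟨i, rfl⟩)
  have hTn : T n ∈ N := hinv n hnN
  rw [hN, Set.singleton_union, Submodule.mem_span_insert] at hTn
  obtain ⟨a, z, hz, hTe⟩ := hTn
  rw [Submodule.mem_span_range_iff_exists_fun] at hz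
  obtain ⟨c, rfl⟩ := hz
  refine ⟨a, ?_⟩
  have hc : ∀ j, c j = 0 := by
    intro j
    have h1 : g (x j) (T n) = 0 := by
      rw [hsymm, hsa]
      exact hgn _ (hinv _ (hxN j))
    rw [hTe] at h1
    have h2 : g (x j) (a • n + ∑ i, c i • x i) = c j := by
      simp only [map_add, map_smul, LinearMap.add_apply, LinearMap.smul_apply,
        map_sum, LinearMap.sum_apply]
      rw [hsymm (x j) n, hnx j]
      simp [hortho]
    rw [h2] at h1
    exact h1
  rw [hTe]
  simp [hc]
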